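/- Let κ be a cardinal and let P_κ be the set of partial functions from κ to finite binary sequences with countable domain, ordered by: p ≤ q iff dom(p) ⊇ dom(q), q(α) is an initial segment of p(α) for every α ∈ dom(q), and the set {β ∈ dom(q) : p(β) ≠ q(β)} is finite. Then every antichain in P_κ (a set of conditions that are pairwise incompatible, i.e., pairwise have no common lower bound in this order) has cardinality at most 𝔠 (so P_κ satisfies the 𝔠⁺-chain condition). -/

import Mathlib

universe u

open Cardinal

/-- `Pkappa κ` is the set `P_κ` of partial functions from the ordinals below `κ`
(represented by the canonical type `κ.ord.ToType`) to finite binary sequences (elements of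
`2^{<ω}`, encoded as `List Bool`) whose domain is countable.  A partial function is encoded
as an `Option`-valued function, its domain being the set where the value is not `none`. -/
def Pkappa (κ : Cardinal.{u}) : Type u :=
  {p : κ.ord.ToType → Option (List Bool) // {α | p α ≠ none}.Countable}

/-- The order on `P_κ`: `p ≤ q` iff `dom p ⊇ dom q`, `q α` is an initial segment of `p α`
for every `α ∈ dom q`, and `p` differs from `q` on only finitely many points of `dom q`. -/
def PkappaLE {κ : Cardinal.{u}} (p q : Pkappa κ) : Prop :=
  (∀ α s, q.1 α = some s → ∃ t, p.1 α = some t ∧ s <+: t) ∧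
    {α | q.1 α ≠ none ∧ p.1 α ≠ q.1 α}.Finite

namespace Stmt11Aux

open Set Ordinal

instance {κ : Cardinal.{u}} : Nonempty (Pkappa κ) := ⟨⟨fun _ => none, by simp⟩⟩

open Classical in
/-- Two conditions that agree on the intersection of their domains are compatible. -/
lemma compat {κ : Cardinal.{u}} {p q : Pkappa κ}
    (h : ∀ α, p.1 α ≠ none → q.1 α ≠ none → p.1 α = q.1 α) :
    ∃ s : Pkappa κ, PkappaLE s p ∧ PkappaLE s q := by
  refine ⟨⟨fun α => if p.1 α = none then q.1 α else p.1 α, ?_⟩, ?_, ?_⟩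
  · apply Set.Countable.mono ?_ (p.2.union q.2)
    intro α hα
    simp only [mem_setOf_eq] at hα ⊢
    by_cases hp : p.1 α = none
    · right; simpa [hp] using hα
    · left; exact hp
  · constructor
    · intro α s hs
      refine ⟨s, ?_, List.prefix_refl s⟩
      simp [hs]
    · convert Set.finite_empty
      ext α
      simp only [mem_setOf_eq, mem_empty_iff_false, iff_false, not_and, not_not]
      intro hp
      simp [hp]
  · constructor
    · intro α s hs
      refine ⟨s, ?_, List.prefix_refl s⟩
      by_cases hp : p.1 α = none
      · simp [hp, hs]
      · simp only [if_neg hp]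
        rw [h α hp (by simp [hs]), hs]
    · convert Set.finite_empty
      ext α
      simp only [mem_setOf_eq, mem_empty_iff_false, iff_false, not_and, not_not]
      intro hq
      by_cases hp : p.1 α = none
      · simp [hp]
      · simp only [if_neg hp]
        exact h α hp hq

/-- A condition can be encoded, relative to a set `S`, by a sequence recording its
(countably many) values on `S`. -/
lemma exists_code {κ : Cardinal.{u}} (S : Set κ.ord.ToType) (p : Pkappa κ) :
    ∃ e : ℕ → Option (S × List Bool),
      ∀ (a : S) (l : List Bool), p.1 a = some l ↔ ∃ n, e n = some (a, l) := by
  have hT : {a : S | p.1 a ≠ none}.Countable :=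
    (p.2.preimage Subtype.val_injective)
  rcases Set.eq_empty_or_nonempty {a : S | p.1 a ≠ none} with hE | hne
  · refine ⟨fun _ => none, fun a l => ?_⟩
    constructor
    · intro hl
      exact absurd (by simp [mem_setOf_eq, hl] : a ∈ {a : S | p.1 a ≠ none}) (by simp [hE])
    · rintro ⟨n, hn⟩; simp at hn
  · obtain ⟨f, hf⟩ := Set.Countable.exists_eq_range hT hne
    refine ⟨fun n => (p.1 (f n)).map (fun l => (f n, l)), fun a l => ?_⟩
    constructor
    · intro hl
      have : a ∈ {a : S | p.1 a ≠ none} := by simp [mem_setOf_eq, hl]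
      rw [hf] at this
      obtain ⟨n, rfl⟩ := this
      exact ⟨n, by simp [hl]⟩
    · rintro ⟨n, hn⟩
      simp only [Option.map_eq_some_iff] at hn
      obtain ⟨x, hx, hx2⟩ := hn
      obtain ⟨rfl, rfl⟩ : f n = a ∧ x = l := by
        simpa [Prod.ext_iff] using hx2
      exact hx

/-- A chosen code for a condition relative to a set `S`. -/
noncomputable def code {κ : Cardinal.{u}} (S : Set κ.ord.ToType) (p : Pkappa κ) :
    ℕ → Option (S × List Bool) := (exists_code S p).choose

/-- Conditions with the same code agree on `S`. -/
lemma code_eq {κ : Cardinal.{u}} {S : Set κ.ord.ToType} {p q : Pkappa κ}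
    (h : code S p = code S q) : ∀ a : S, p.1 a = q.1 a := by
  intro a
  have hp : ∀ l, p.1 a = some l ↔ ∃ n, code S p n = some (a, l) :=
    (exists_code S p).choose_spec a
  have hq : ∀ l, q.1 a = some l ↔ ∃ n, code S q n = some (a, l) :=
    (exists_code S q).choose_spec a
  rw [h] at hp
  rcases h1 : p.1 a with _ | l <;> rcases h2 : q.1 a with _ | l'
  · rfl
  · exact absurd ((hp l').2 ((hq l').1 h2)) (by simp [h1])
  · exact absurd ((hq l).2 ((hp l).1 h1)) (by simp [h2])
  · rw [← (hq l).2 ((hp l).1 h1), h2]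

/-- There are at most continuum many codes over a set of size at most continuum. -/
lemma mk_codes {X : Type u} (S : Set X) (hS : #S ≤ continuum) :
    #(ℕ → Option (S × List Bool)) ≤ continuum := by
  have h1 : #(Option (↥S × List Bool)) ≤ continuum := by
    simp only [mk_option, mk_prod, mk_list_eq_aleph0, lift_aleph0, Cardinal.lift_id']
    calc #S * ℵ₀ + 1 ≤ continuum * continuum + continuum := by
          gcongr
          · exact aleph0_le_continuum
          · exact one_le_aleph0.trans aleph0_le_continuum
      _ = continuum := by
          rw [mul_eq_self aleph0_le_continuum, add_eq_self aleph0_le_continuum]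
  calc #(ℕ → Option (↥S × List Bool))
      = #(Option (↥S × List Bool)) ^ (ℵ₀ : Cardinal.{u}) := by
        simp only [mk_arrow, mk_nat, lift_aleph0, Cardinal.lift_id']
    _ ≤ continuum ^ (ℵ₀ : Cardinal.{u}) := power_le_power_right h1
    _ = continuum := continuum_power_aleph0

/-- A chosen representative in `A` (if one exists) of a given code relative to `S`. -/
noncomputable def rep {κ : Cardinal.{u}} (A : Set (Pkappa κ)) (S : Set κ.ord.ToType)
    (e : ℕ → Option (S × List Bool)) : Pkappa κ :=
  open Classical in
  if h : ∃ q ∈ A, code S q = e then h.choose else Classical.arbitrary _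

lemma rep_spec {κ : Cardinal.{u}} {A : Set (Pkappa κ)} (S : Set κ.ord.ToType)
    {p : Pkappa κ} (hp : p ∈ A) :
    rep A S (code S p) ∈ A ∧ code S (rep A S (code S p)) = code S p := by
  have h : ∃ q ∈ A, code S q = code S p := ⟨p, hp, rfl⟩
  rw [rep, dif_pos h]
  exact ⟨h.choose_spec.1, h.choose_spec.2⟩

/-- One closure step: add the domains of all chosen representatives. -/
noncomputable def step {κ : Cardinal.{u}} (A : Set (Pkappa κ)) (S : Set κ.ord.ToType) :
    Set κ.ord.ToType :=
  S ∪ ⋃ e : ℕ → Option (S × List Bool), {α | (rep A S e).1 α ≠ none}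

lemma mk_step_le {κ : Cardinal.{u}} (A : Set (Pkappa κ)) (S : Set κ.ord.ToType)
    (hS : #S ≤ continuum) : #(step A S) ≤ continuum := by
  have h1 : #(⋃ e : ℕ → Option (S × List Bool), {α | (rep A S e).1 α ≠ none}) ≤ continuum := by
    refine le_trans (mk_iUnion_le _) ?_
    have h2 : ⨆ e : ℕ → Option (S × List Bool), #{α | (rep A S e).1 α ≠ none} ≤ ℵ₀ := by
      refine ciSup_le' fun e => ?_
      exact ((rep A S e).2).le_aleph0
    calc #(ℕ → Option (↥S × List Bool)) * ⨆ e, #{α | (rep A S e).1 α ≠ none}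
        ≤ continuum * ℵ₀ := by gcongr; exact mk_codes S hS
      _ ≤ continuum * continuum := by gcongr; exact aleph0_le_continuum
      _ = continuum := mul_eq_self aleph0_le_continuum
  refine le_trans (mk_union_le _ _) ?_
  calc #S + _ ≤ continuum + continuum := by gcongr
    _ = continuum := add_eq_self aleph0_le_continuum

/-- `W` : a canonical well order of type `ω₁`. -/
abbrev W : Type u := (aleph 1 : Cardinal.{u}).ord.ToType

abbrev Wlt : W.{u} → W.{u} → Prop := fun a b => a < b

instance : IsWellOrder W.{u} Wlt.{u} := isWellOrder_lt

lemma mk_W : #(W.{u}) = aleph 1 := by rw [mk_toType, card_ord]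

lemma mk_Iio_W (x : W.{u}) : #{y : W.{u} // y < x} ≤ ℵ₀ := by
  have h1 : #{y : W.{u} // Wlt y x} = (typein Wlt.{u} x).card := card_typein x
  have h2 : typein Wlt.{u} x < (aleph 1 : Cardinal.{u}).ord := typein_lt_self x
  have h3 := Cardinal.lt_ord.1 h2
  rw [← h1] at h3
  exact Order.le_of_lt_succ (by rwa [succ_aleph0])

/-- Any countable subset of `W` is strictly bounded above. -/
lemma exists_bound {C : Set W.{u}} (hC : C.Countable) : ∃ b : W.{u}, ∀ a ∈ C, a < b := by
  have hcof : (aleph 1 : Cardinal.{u}).ord.cof = aleph 1 := isRegular_aleph_one.cof_eq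
  have hlim : Order.IsSuccLimit ((aleph 1 : Cardinal.{u}).ord) := isSuccLimit_ord (aleph0_le_aleph 1)
  have hC' : #C < (aleph 1 : Cardinal.{u}).ord.cof := by
    rw [hcof]
    exact hC.le_aleph0.trans_lt aleph0_lt_aleph_one
  have hsup : (⨆ a : C, Order.succ (typein Wlt.{u} a.1)) < (aleph 1 : Cardinal.{u}).ord :=
    iSup_lt_ord hC' fun a => hlim.succ_lt (typein_lt_self a.1)
  obtain ⟨b, hb⟩ := typein_surj Wlt.{u}
    (show _ < type Wlt.{u} by rw [show type Wlt.{u} = _ from type_toType _]; exact hsup)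
  refine ⟨b, fun a ha => ?_⟩
  have h4 : typein Wlt.{u} a < typein Wlt.{u} b := by
    rw [hb]
    calc typein Wlt.{u} a < Order.succ (typein Wlt.{u} a) := Order.lt_succ _
      _ ≤ ⨆ a : C, Order.succ (typein Wlt.{u} a.1) := Ordinal.le_iSup _ (⟨a, ha⟩ : C)
  exact (typein_lt_typein Wlt.{u}).1 h4

/-- The increasing `ω₁`-chain of stages of the closure construction. -/
noncomputable def stage {κ : Cardinal.{u}} (A : Set (Pkappa κ)) : W.{u} → Set κ.ord.ToType
  | x => step A (⋃ y : {y : W.{u} // y < x}, stage A y.1)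
termination_by x => x
decreasing_by exact y.2

/-- Union of earlier stages. -/
noncomputable def prevU {κ : Cardinal.{u}} (A : Set (Pkappa κ)) (x : W.{u}) :
    Set κ.ord.ToType :=
  ⋃ y : {y : W.{u} // y < x}, stage A y.1

lemma stage_eq {κ : Cardinal.{u}} (A : Set (Pkappa κ)) (x : W.{u}) :
    stage A x = step A (prevU A x) := by
  rw [stage, prevU]

lemma prevU_subset_stage {κ : Cardinal.{u}} (A : Set (Pkappa κ)) (x : W.{u}) :
    prevU A x ⊆ stage A x := by
  rw [stage_eq]; exact subset_union_left

lemma stage_subset_prevU {κ : Cardinal.{u}} (A : Set (Pkappa κ)) {y x : W.{u}} (h : y < x) :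
    stage A y ⊆ prevU A x :=
  subset_iUnion (fun y : {y : W.{u} // y < x} => stage A y.1) ⟨y, h⟩

lemma dom_rep_subset {κ : Cardinal.{u}} (A : Set (Pkappa κ)) (x : W.{u})
    (e : ℕ → Option (prevU A x × List Bool)) :
    {α | (rep A (prevU A x) e).1 α ≠ none} ⊆ stage A x := by
  rw [stage_eq]
  exact subset_union_right.trans' (subset_iUnion
    (fun e : ℕ → Option (prevU A x × List Bool) => {α | (rep A (prevU A x) e).1 α ≠ none}) e)

lemma mk_prevU_le {κ : Cardinal.{u}} (A : Set (Pkappa κ)) (x : W.{u})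
    (IH : ∀ y : W.{u}, y < x → #(stage A y) ≤ continuum) : #(prevU A x) ≤ continuum := by
  rcases isEmpty_or_nonempty {y : W.{u} // y < x} with hE | hne
  · rw [prevU, iUnion_of_empty]
    simp
  refine le_trans (mk_iUnion_le _) ?_
  calc #{y : W.{u} // y < x} * ⨆ y : {y : W.{u} // y < x}, #(stage A y.1)
      ≤ ℵ₀ * continuum := by
        gcongr
        · exact mk_Iio_W x
        · exact ciSup_le' fun y => IH y.1 y.2
    _ ≤ continuum * continuum := by gcongr; exact aleph0_le_continuum
    _ = continuum := mul_eq_self aleph0_le_continuum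

lemma mk_stage_le {κ : Cardinal.{u}} (A : Set (Pkappa κ)) :
    ∀ x : W.{u}, #(stage A x) ≤ continuum := by
  intro x
  induction x using WellFoundedLT.induction with
  | _ x IH =>
    rw [stage_eq]
    exact mk_step_le A _ (mk_prevU_le A x IH)

end Stmt11Aux

/-- Every antichain in `P_κ` (a set of conditions which pairwise have no common lower bound)
has cardinality at most `𝔠`; that is, `P_κ` satisfies the `𝔠⁺`-chain condition. -/
theorem stmt11 (κ : Cardinal.{u}) (A : Set (Pkappa κ))
    (hA : ∀ p ∈ A, ∀ q ∈ A, p ≠ q → ¬ ∃ s : Pkappa κ, PkappaLE s p ∧ PkappaLE s q) :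
    Cardinal.mk A ≤ continuum := by
  open Stmt11Aux Set Ordinal in
  by_contra hcon
  push_neg at hcon
  -- the final stage `Stot` and the set `Btot` of all chosen representatives
  set Stot : Set κ.ord.ToType := ⋃ x : W.{u}, stage A x with hStot
  set Btot : Set (Pkappa κ) :=
    ⋃ x : W.{u}, (A ∩ Set.range (rep A (prevU A x))) with hBtot
  have hBle : #Btot ≤ continuum := by
    refine le_trans (mk_iUnion_le _) ?_
    calc #(W.{u}) * ⨆ x : W.{u}, #(A ∩ Set.range (rep A (prevU A x)) : Set (Pkappa κ))
        ≤ continuum * continuum := by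
          gcongr
          · rw [mk_W]; exact aleph_one_le_continuum
          · refine ciSup_le' fun x => ?_
            refine le_trans (mk_le_mk_of_subset inter_subset_right) ?_
            refine le_trans mk_range_le ?_
            exact mk_codes _ (mk_prevU_le A x (fun y _ => mk_stage_le A y))
      _ = continuum := mul_eq_self aleph0_le_continuum
  -- pick `p ∈ A` outside `Btot`
  have hns : ¬ A ⊆ Btot := fun hsub => absurd (le_trans (mk_le_mk_of_subset hsub) hBle)
    (not_le.2 hcon)
  obtain ⟨p, hpA, hpB⟩ := not_subset.1 hns
  -- the part of the domain of `p` inside `Stot` is covered by `prevU A b` for some `b`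
  set D : Set κ.ord.ToType := {α | p.1 α ≠ none} ∩ Stot with hD
  have hDc : D.Countable := p.2.mono inter_subset_left
  have hDx : ∀ a : D, ∃ x : W.{u}, (a : κ.ord.ToType) ∈ stage A x := by
    rintro ⟨a, -, ha⟩
    exact mem_iUnion.1 ha
  choose φ hφ using hDx
  haveI := hDc.to_subtype
  obtain ⟨b, hb⟩ := exists_bound (Set.countable_range φ)
  have hDU : ∀ a : D, (a : κ.ord.ToType) ∈ prevU A b := fun a =>
    stage_subset_prevU A (hb (φ a) (mem_range_self a)) (hφ a)
  -- the chosen representative with the same trace as `p` on `prevU A b`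
  set q : Pkappa κ := rep A (prevU A b) (code (prevU A b) p) with hq
  obtain ⟨hqA, hqc⟩ := rep_spec (A := A) (prevU A b) hpA
  have hqB : q ∈ Btot := mem_iUnion.2 ⟨b, ⟨hqA, mem_range_self _⟩⟩
  have hqp : q ≠ p := fun h => hpB (h ▸ hqB)
  have hagree : ∀ a : prevU A b, q.1 a = p.1 a := code_eq hqc
  -- `q` and `p` agree on the intersection of their domains, hence are compatible
  have hcompat : ∀ α, q.1 α ≠ none → p.1 α ≠ none → q.1 α = p.1 α := by
    intro α hqα hpα
    have hα1 : α ∈ stage A b := dom_rep_subset A b _ hqα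
    have hα2 : α ∈ D := ⟨hpα, mem_iUnion.2 ⟨b, hα1⟩⟩
    exact hagree ⟨α, hDU ⟨α, hα2⟩⟩
  exact hA q hqA p hpA hqp (compat hcompat)
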